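/- Let X₁, …, Xₙ be independent real-valued integrable random variables with finite variances on a probability space, and let m > 0 satisfy m > |E[Xₖ]| for every k. Let Zₖ = max(min(Xₖ, m), −m) be the truncation of Xₖ to [−m, m]. Then for every z > 0, P[|Σₖ Zₖ − Σₖ E[Xₖ]| ≥ z] ≤ 2 · exp( Σₖ Var[Xₖ] / (m(m − |E[Xₖ]|)) − z/m ). -/

import Mathlib

open MeasureTheory ProbabilityTheory Real

lemma expA0 {s : ℝ} (hs : s ≤ 1) : exp s ≤ 1 + s + s ^ 2 := by
  rcases le_or_gt (-1) s with h | h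
  · have := Real.abs_exp_sub_one_sub_id_le (x := s) (abs_le.2 ⟨h, hs⟩)
    have := abs_le.1 this
    linarith [this.2]
  · have h1 : exp s ≤ 1 := Real.exp_le_one_iff.2 (by linarith)
    nlinarith
lemma expA {a s : ℝ} (ha0 : 0 ≤ a) (ha1 : a < 1) (hs : s ≤ 1 + a) :
    exp s ≤ 1 + s + s ^ 2 / (1 - a) := by
  have h1 : (0:ℝ) < 1 - a := by linarith
  rcases le_or_gt s 1 with h | h
  · have := expA0 h
    have h2 : s ^ 2 ≤ s ^ 2 / (1 - a) := by
      rw [le_div_iff₀ h1]; nlinarith [sq_nonneg s]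
    linarith
  · set u := s - 1 with hu
    have hu0 : 0 ≤ u := by simp only [hu]; linarith
    have hua : u ≤ a := by simp only [hu]; linarith
    have e1 : exp u * (1 - u) ≤ 1 := by
      have h3 : (1 - u) ≤ exp (-u) := by linarith [Real.add_one_le_exp (-u)]
      calc exp u * (1 - u) ≤ exp u * exp (-u) :=
            mul_le_mul_of_nonneg_left h3 (exp_nonneg u)
        _ = 1 := by rw [← Real.exp_add]; simp
    have e3 : exp a * (1 - a) ≤ 1 := by
      have h3 : (1 - a) ≤ exp (-a) := by linarith [Real.add_one_le_exp (-a)]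
      calc exp a * (1 - a) ≤ exp a * exp (-a) :=
            mul_le_mul_of_nonneg_left h3 (exp_nonneg a)
        _ = 1 := by rw [← Real.exp_add]; simp
    have e2 : exp u ≤ exp a := Real.exp_le_exp.2 hua
    -- exp u ≤ 1 + u / (1-a)
    have e4 : exp u * (1 - a) ≤ (1 - a) + u := by
      nlinarith [exp_nonneg u, exp_nonneg a, mul_le_mul_of_nonneg_right e2 h1.le]
    have hse : exp s = exp 1 * exp u := by rw [← Real.exp_add]; congr 1; simp [hu]
    have hexp1 : exp 1 < 2.7182818286 := Real.exp_one_lt_d9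
    have key : exp s * (1 - a) ≤ (1 + s + s ^ 2 / (1 - a)) * (1 - a) := by
      have hrhs : (1 + s + s ^ 2 / (1 - a)) * (1 - a) = (1 + s) * (1 - a) + s ^ 2 := by
        field_simp
      rw [hrhs, hse]
      have h6 : exp 1 * (exp u * (1 - a)) ≤ exp 1 * ((1 - a) + u) :=
        mul_le_mul_of_nonneg_left e4 (exp_nonneg 1)
      have hs1 : s = 1 + u := by simp [hu]
      have hb1 : 1 - a ≤ 1 := by linarith
      nlinarith [sq_nonneg (u - 0.36), exp_nonneg 1, mul_pos (exp_pos 1) h1,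
        mul_le_mul_of_nonneg_right hexp1.le (by linarith [h1, hu0] : (0:ℝ) ≤ (1-a) + u)]
    exact le_of_mul_le_mul_right (by linarith [key]) h1


lemma expB {a s t : ℝ} (ha0 : 0 ≤ a) (ha1 : a < 1)
    (hcase : (s = t ∧ s ≤ 1 + a) ∨ (0 < s ∧ s ≤ 1 + a ∧ s ≤ t) ∨ (t ≤ s ∧ s ≤ -(1 - a))) :
    exp s ≤ 1 + t + t ^ 2 / (1 - a) := by
  have h1 : (0:ℝ) < 1 - a := by linarith
  rcases hcase with ⟨rfl, hs⟩ | ⟨hs0, hs, hst⟩ | ⟨hts, hs⟩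
  · exact expA ha0 ha1 hs
  · refine (expA ha0 ha1 hs).trans ?_
    have h2 : s ^ 2 / (1 - a) ≤ t ^ 2 / (1 - a) := by
      gcongr
    linarith
  · refine (expA ha0 ha1 (by linarith)).trans ?_
    have h2 : s - t ≤ (t ^ 2 - s ^ 2) / (1 - a) := by
      rw [le_div_iff₀ h1]
      nlinarith [mul_nonneg (sub_nonneg.2 hts) (show (0:ℝ) ≤ -(s + t) - (1 - a) by linarith)]
    have h3 : (t ^ 2 - s ^ 2) / (1 - a) = t ^ 2 / (1 - a) - s ^ 2 / (1 - a) := sub_div _ _ _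
    linarith

lemma truncB {x μ m : ℝ} (hm : 0 < m) (hμ : |μ| < m) :
    exp ((max (min x m) (-m) - μ) / m) ≤ 1 + (x - μ) / m + (x - μ) ^ 2 / (m * (m - |μ|)) := by
  obtain ⟨hμ1, hμ2⟩ := abs_lt.1 hμ
  have ha0 : 0 ≤ |μ| / m := div_nonneg (abs_nonneg μ) hm.le
  have ha1 : |μ| / m < 1 := (div_lt_one hm).2 hμ
  have hmμ : 0 < m - |μ| := by linarith
  have hkey : (x - μ) ^ 2 / (m * (m - |μ|)) = ((x - μ) / m) ^ 2 / (1 - |μ| / m) := by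
    rw [div_eq_div_iff (by positivity) (by nlinarith)]
    field_simp
  rw [hkey]
  apply expB ha0 ha1
  have hb := neg_abs_le μ
  have hdm : |μ| / m * m = |μ| := div_mul_cancel₀ _ hm.ne'
  have hc := le_abs_self μ
  rcases le_or_gt x (-m) with hx1 | hx1
  · right; right
    rw [min_eq_left (by linarith), max_eq_right (by linarith)]
    constructor
    · rw [div_le_div_iff₀ hm hm]; nlinarith
    · have : -(1 - |μ| / m) = (|μ| - m) / m := by field_simp; ring
      rw [this, div_le_div_iff₀ hm hm]; nlinarith
  · rcases le_or_gt x m with hx2 | hx2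
    · left
      rw [min_eq_left hx2, max_eq_left (by linarith)]
      refine ⟨rfl, ?_⟩
      rw [div_le_iff₀ hm]; nlinarith [hdm]
    · right; left
      rw [min_eq_right hx2.le, max_eq_left (by linarith)]
      refine ⟨div_pos (by linarith) hm, ?_, ?_⟩
      · rw [div_le_iff₀ hm]; nlinarith [hdm]
      · rw [div_le_div_iff₀ hm hm]; nlinarith


lemma variance_ae_eq {Ω : Type*} [MeasurableSpace Ω] {P : Measure Ω} {X Y : Ω → ℝ}
    (h : X =ᵐ[P] Y) : variance X P = variance Y P := by
  have h2 : P[X] = P[Y] := integral_congr_ae h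
  rw [variance, variance, evariance, evariance, h2]
  exact congrArg _ (lintegral_congr_ae (h.mono fun ω hω => by simp only []; rw [hω]))

lemma iIndepFun_ae {Ω : Type*} {ι : Type*} [MeasurableSpace Ω] {P : Measure Ω}
    [IsProbabilityMeasure P] {X Y : ι → Ω → ℝ}
    (h : iIndepFun X P) (hae : ∀ i, X i =ᵐ[P] Y i) :
    iIndepFun Y P := by
  rw [iIndepFun_iff_measure_inter_preimage_eq_mul] at h ⊢
  intro S sets hsets
  have hS : ∀ᵐ ω ∂P, ∀ i ∈ S, X i ω = Y i ω :=
    (ae_ball_iff S.countable_toSet).2 fun i _ => hae i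
  have h1 : (⋂ i ∈ S, Y i ⁻¹' sets i) =ᵐ[P] (⋂ i ∈ S, X i ⁻¹' sets i) := by
    apply Filter.eventuallyEq_set.mpr
    filter_upwards [hS] with ω hω
    simp only [Set.mem_iInter, Set.mem_preimage]
    exact ⟨fun h' i hi => (hω i hi) ▸ h' i hi, fun h' i hi => (hω i hi).symm ▸ h' i hi⟩
  rw [measure_congr h1, h S hsets]
  exact Finset.prod_congr rfl fun i hi => (measure_congr
    (Filter.eventuallyEq_set.mpr ((hae i).mono fun ω hω => by
      simp only [Set.mem_preimage, hω]))).symm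

lemma mgf_trunc_le {Ω : Type*} [MeasureSpace Ω] [IsProbabilityMeasure (ℙ : Measure Ω)]
    {X : Ω → ℝ} (hXm : Measurable X) (hX2 : MemLp X 2 ℙ) {m : ℝ} (hm : 0 < m)
    {c : ℝ} (hc : c = ∫ ω, X ω) (hcm : |c| < m) :
    mgf (fun ω => max (min (X ω) m) (-m) - c) ℙ (1 / m) ≤
      exp (variance X ℙ / (m * (m - |c|))) := by
  have hXi : Integrable X ℙ := hX2.integrable one_le_two
  have hmc : 0 < m - |c| := by linarith
  set W : Ω → ℝ := fun ω => max (min (X ω) m) (-m) - c with hW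
  have hWm : Measurable W := ((hXm.min measurable_const).max measurable_const).sub
    measurable_const
  have hWb : ∀ ω, W ω ≤ m + |c| := by
    intro ω
    simp only [hW]
    have h1 : min (X ω) m ≤ m := min_le_right _ _
    have h2 : max (min (X ω) m) (-m) ≤ m := max_le h1 (by linarith)
    have := neg_abs_le c
    linarith
  -- integrability of lhs
  have hint1 : Integrable (fun ω => exp (1 / m * W ω)) ℙ := by
    refine Integrable.mono' (integrable_const (exp ((m + |c|) / m)))
      ((hWm.const_mul _).exp.aestronglyMeasurable) (ae_of_all _ fun ω => ?_)
    rw [Real.norm_eq_abs, abs_of_pos (exp_pos _), exp_le_exp]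
    calc 1 / m * W ω ≤ 1 / m * (m + |c|) := by
          apply mul_le_mul_of_nonneg_left (hWb ω) (by positivity)
      _ = (m + |c|) / m := by ring
  -- integrable rhs
  have hXc2 : Integrable (fun ω => (X ω - c) ^ 2) ℙ := (hX2.sub (memLp_const c)).integrable_sq
  have ia : Integrable (fun ω => (X ω - c) / m) ℙ := (hXi.sub (integrable_const c)).div_const m
  have ib : Integrable (fun ω => (X ω - c) ^ 2 / (m * (m - |c|))) ℙ := hXc2.div_const _
  have i1 : Integrable (fun ω => 1 + (X ω - c) / m) ℙ := (integrable_const 1).add ia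
  have hint2 : Integrable (fun ω => 1 + (X ω - c) / m + (X ω - c) ^ 2 / (m * (m - |c|))) ℙ :=
    i1.add ib
  have hpt : ∀ ω, exp (1 / m * W ω) ≤ 1 + (X ω - c) / m + (X ω - c) ^ 2 / (m * (m - |c|)) := by
    intro ω
    have := truncB (x := X ω) (μ := c) hm hcm
    rwa [one_div, inv_mul_eq_div]
  have hval : ∫ ω, (1 + (X ω - c) / m + (X ω - c) ^ 2 / (m * (m - |c|))) ∂ℙ =
      1 + variance X ℙ / (m * (m - |c|)) := by
    have hvar : variance X ℙ = ∫ ω, (X ω - c) ^ 2 ∂ℙ := by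
      rw [variance_eq_integral hXm.aemeasurable, ← hc]
    rw [integral_add i1 ib, integral_add (integrable_const 1) ia, integral_const,
      integral_div, integral_div, integral_sub hXi (integrable_const c), integral_const,
      ← hvar]
    simp [hc]
  calc mgf W ℙ (1 / m) = ∫ ω, exp (1 / m * W ω) ∂ℙ := rfl
    _ ≤ ∫ ω, (1 + (X ω - c) / m + (X ω - c) ^ 2 / (m * (m - |c|))) ∂ℙ :=
        integral_mono hint1 hint2 hpt
    _ = 1 + variance X ℙ / (m * (m - |c|)) := hval
    _ ≤ exp (variance X ℙ / (m * (m - |c|))) := by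
        linarith [Real.add_one_le_exp (variance X ℙ / (m * (m - |c|)))]

lemma neg_trunc {m : ℝ} (hm : 0 ≤ m) (x : ℝ) :
    max (min (-x) m) (-m) = -max (min x m) (-m) := by
  simp only [min_def, max_def]
  split_ifs <;> linarith

theorem truncation_concentration {Ω : Type*} [MeasureSpace Ω]
    [IsProbabilityMeasure (ℙ : Measure Ω)] (n : ℕ) (X : Fin n → Ω → ℝ)
    (hXind : iIndepFun X ℙ)
    (hXint : ∀ k, Integrable (X k)) (hX2 : ∀ k, MemLp (X k) 2 ℙ)
    (m : ℝ) (hm : 0 < m) (hmE : ∀ k, |∫ ω, X k ω| < m)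
    (Z : Fin n → Ω → ℝ) (hZ : ∀ k ω, Z k ω = max (min (X k ω) m) (-m))
    (z : ℝ) (hz : 0 < z) :
    ℙ {ω | z ≤ |(∑ k, Z k ω) - ∑ k, ∫ ω', X k ω'|} ≤
      ENNReal.ofReal
        (2 * exp ((∑ k, variance (X k) ℙ / (m * (m - |∫ ω, X k ω|))) - z / m)) := by
  set μk : Fin n → ℝ := fun k => ∫ ω, X k ω with hμk
  set v : Fin n → ℝ := fun k => variance (X k) ℙ / (m * (m - |μk k|)) with hv
  set g : ℝ → ℝ := fun x => max (min x m) (-m) with hg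
  have hgm : Measurable g := (measurable_id.min measurable_const).max measurable_const
  set X' : Fin n → Ω → ℝ := fun k => ((hXint k).1).mk (X k) with hX'
  have hae : ∀ k, X k =ᵐ[ℙ] X' k := fun k => ((hXint k).1).ae_eq_mk
  have hXm' : ∀ k, Measurable (X' k) := fun k => ((hXint k).1).measurable_mk
  have hX2' : ∀ k, MemLp (X' k) 2 ℙ := fun k => (hX2 k).ae_eq (hae k)
  have hμ' : ∀ k, μk k = ∫ ω, X' k ω := fun k => integral_congr_ae (hae k)
  have hvar' : ∀ k, variance (X' k) ℙ = variance (X k) ℙ := fun k =>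
    (variance_ae_eq (hae k)).symm
  have hind' : iIndepFun X' ℙ := iIndepFun_ae hXind hae
  -- Chernoff machinery
  have chern : ∀ Y : Fin n → Ω → ℝ, iIndepFun Y ℙ →
      (∀ k, Measurable (Y k)) → (∀ k ω, Y k ω ≤ m + |μk k|) →
      (∀ k, mgf (Y k) ℙ (1 / m) ≤ exp (v k)) →
      (ℙ {ω | z ≤ ∑ k, Y k ω}).toReal ≤ exp ((∑ k, v k) - z / m) := by
    intro Y hind hmeas hb hmgf
    have hsum_eq : (∑ k, Y k) = fun ω => ∑ k, Y k ω :=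
      funext fun ω => Finset.sum_apply ω Finset.univ Y
    have hintS0 : Integrable (fun ω => exp (1 / m * ∑ k, Y k ω)) ℙ := by
      refine Integrable.mono' (integrable_const (exp (1 / m * ∑ k, (m + |μk k|))))
        ((((Finset.univ.measurable_sum (fun k _ => hmeas k)).const_mul
          (1 / m)).exp).aestronglyMeasurable) (ae_of_all _ fun ω => ?_)
      rw [Real.norm_eq_abs, abs_of_pos (exp_pos _), exp_le_exp]
      apply mul_le_mul_of_nonneg_left _ (by positivity : (0:ℝ) ≤ 1 / m)
      exact Finset.sum_le_sum fun k _ => hb k ω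
    have hintS : Integrable (fun ω => exp (1 / m * (∑ k, Y k) ω)) ℙ := by
      rw [hsum_eq]; exact hintS0
    have h1 := measure_ge_le_exp_mul_mgf (X := ∑ k, Y k) (μ := ℙ) z
      (by positivity : (0:ℝ) ≤ 1 / m) hintS
    rw [hind.mgf_sum hmeas, hsum_eq] at h1
    simp only [] at h1
    have h2 : ∏ k, mgf (Y k) ℙ (1 / m) ≤ ∏ k, exp (v k) :=
      Finset.prod_le_prod (fun k _ => mgf_nonneg) fun k _ => hmgf k
    calc (ℙ {ω | z ≤ ∑ k, Y k ω}).toReal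
        ≤ exp (-(1 / m) * z) * ∏ k, mgf (Y k) ℙ (1 / m) := h1
      _ ≤ exp (-(1 / m) * z) * ∏ k, exp (v k) :=
          mul_le_mul_of_nonneg_left h2 (exp_pos _).le
      _ = exp ((∑ k, v k) - z / m) := by
          rw [← Real.exp_sum, ← Real.exp_add]; congr 1; ring
  -- upper tail
  set W : Fin n → Ω → ℝ := fun k ω => g (X' k ω) - μk k with hW
  have hindW : iIndepFun W ℙ :=
    hind'.comp (fun k x => g x - μk k) fun k => hgm.sub measurable_const
  have hmeasW : ∀ k, Measurable (W k) := fun k => (hgm.comp (hXm' k)).sub measurable_const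
  have hbW : ∀ k ω, W k ω ≤ m + |μk k| := by
    intro k ω
    have h1 : g (X' k ω) ≤ m := max_le (min_le_right _ _) (by linarith)
    have := neg_abs_le (μk k)
    simp only [hW]
    linarith
  have hmgfW : ∀ k, mgf (W k) ℙ (1 / m) ≤ exp (v k) := by
    intro k
    have := mgf_trunc_le (hXm' k) (hX2' k) hm (hμ' k) (hmE k)
    rwa [hvar' k] at this
  have tU := chern W hindW hmeasW hbW hmgfW
  -- lower tail
  set W' : Fin n → Ω → ℝ := fun k ω => g (-X' k ω) + μk k with hW'
  have hindW' : iIndepFun W' ℙ :=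
    hind'.comp (fun k x => g (-x) + μk k) fun k =>
      ((hgm.comp measurable_neg).add measurable_const)
  have hmeasW' : ∀ k, Measurable (W' k) := fun k =>
    (hgm.comp (hXm' k).neg).add measurable_const
  have hbW' : ∀ k ω, W' k ω ≤ m + |μk k| := by
    intro k ω
    have h1 : g (-X' k ω) ≤ m := max_le (min_le_right _ _) (by linarith)
    have := le_abs_self (μk k)
    simp only [hW']
    linarith
  have hmgfW' : ∀ k, mgf (W' k) ℙ (1 / m) ≤ exp (v k) := by
    intro k
    have hc : -μk k = ∫ ω, -X' k ω := by rw [integral_neg, hμ' k]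
    have hvneg : variance (fun ω => -X' k ω) ℙ = variance (X k) ℙ := by
      rw [show (fun ω => -X' k ω) = fun ω => (-1 : ℝ) * X' k ω from
        funext fun ω => (neg_one_mul _).symm, variance_const_mul, hvar' k]
      norm_num
    have := mgf_trunc_le ((hXm' k).neg) ((hX2' k).neg) hm hc
      (by rw [abs_neg]; exact hmE k)
    rw [show (-X' k) = fun ω => -X' k ω from rfl, hvneg, abs_neg] at this
    simp only [sub_neg_eq_add] at this
    exact this
  have tL := chern W' hindW' hmeasW' hbW' hmgfW'
  -- event manipulation
  have hWW' : ∀ ω, (∑ k, W' k ω) = -∑ k, W k ω := by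
    intro ω
    rw [← Finset.sum_neg_distrib]
    refine Finset.sum_congr rfl fun k _ => ?_
    simp only [hW, hW', hg]
    rw [neg_trunc hm.le]
    ring
  have hES : {ω | z ≤ |(∑ k, Z k ω) - ∑ k, ∫ ω', X k ω'|} =ᵐ[ℙ]
      {ω | z ≤ |∑ k, W k ω|} := by
    apply Filter.eventuallyEq_set.mpr
    have hS : ∀ᵐ ω ∂ℙ, ∀ k, X k ω = X' k ω := ae_all_iff.2 fun k => hae k
    filter_upwards [hS] with ω hω
    have : (∑ k, Z k ω) - ∑ k, ∫ ω', X k ω' = ∑ k, W k ω := by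
      rw [← Finset.sum_sub_distrib]
      refine Finset.sum_congr rfl fun k _ => ?_
      simp only [hW, hZ k ω, hω k, hg, hμk]
    simp only [Set.mem_setOf_eq, this]
  have habs : {ω | z ≤ |∑ k, W k ω|} ⊆
      {ω | z ≤ ∑ k, W k ω} ∪ {ω | z ≤ ∑ k, W' k ω} := by
    intro ω hω
    simp only [Set.mem_setOf_eq, Set.mem_union, hWW' ω] at *
    rcases abs_cases (∑ k, W k ω) with ⟨h, _⟩ | ⟨h, _⟩
    · left; linarith
    · right; linarith
  have hofReal : ∀ (A : Set Ω), (ℙ A).toReal ≤ exp ((∑ k, v k) - z / m) →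
      ℙ A ≤ ENNReal.ofReal (exp ((∑ k, v k) - z / m)) := by
    intro A hA
    rw [← ENNReal.ofReal_toReal (measure_ne_top ℙ A)]
    exact ENNReal.ofReal_le_ofReal hA
  calc ℙ {ω | z ≤ |(∑ k, Z k ω) - ∑ k, ∫ ω', X k ω'|}
      = ℙ {ω | z ≤ |∑ k, W k ω|} := measure_congr hES
    _ ≤ ℙ ({ω | z ≤ ∑ k, W k ω} ∪ {ω | z ≤ ∑ k, W' k ω}) := measure_mono habs
    _ ≤ ℙ {ω | z ≤ ∑ k, W k ω} + ℙ {ω | z ≤ ∑ k, W' k ω} := measure_union_le _ _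
    _ ≤ ENNReal.ofReal (exp ((∑ k, v k) - z / m)) +
        ENNReal.ofReal (exp ((∑ k, v k) - z / m)) :=
          add_le_add (hofReal _ tU) (hofReal _ tL)
    _ = ENNReal.ofReal (2 * exp ((∑ k, v k) - z / m)) := by
        rw [← ENNReal.ofReal_add (exp_nonneg _) (exp_nonneg _), two_mul]
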